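/- Let H be a symmetric operator on a finite-dimensional real inner product space with smallest eigenvalue E₀ of multiplicity one having unit eigenvector ψ₀, and second smallest eigenvalue E₁ > E₀. Let φ be a unit vector whose decomposition φ = v₀ + w₀, with v₀ the orthogonal projection onto span(ψ₀) and w₀ ⊥ ψ₀, satisfies v₀ ≠ 0. Then for all t ≥ 0, letting ψ(t) = e^{−2tH}φ / ‖e^{−2tH}φ‖ and v = v₀/‖v₀‖, one has ‖v − ψ(t)‖ ≤ √2 (‖w₀‖/‖v₀‖) e^{−2(E₁−E₀)t}. -/

import Mathlib

open scoped RealInnerProductSpace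

open NormedSpace in
lemma exp_apply_eigen {F : Type*} [NormedAddCommGroup F] [InnerProductSpace ℝ F]
    [CompleteSpace F] (A : F →L[ℝ] F) (c : ℝ) (x : F) (h : A x = c • x) :
    NormedSpace.exp A x = Real.exp c • x := by
  have hpow : ∀ n : ℕ, (A ^ n) x = c ^ n • x := by
    intro n
    induction n with
    | zero => simp
    | succ n ih =>
        rw [pow_succ, ContinuousLinearMap.mul_apply, h, map_smul, ih, smul_smul, ← pow_succ']
  have hs : Summable fun n : ℕ => (Nat.factorial n : ℝ)⁻¹ • A ^ n := expSeries_summable' A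
  have h1 : NormedSpace.exp A x = ∑' n : ℕ, ((Nat.factorial n : ℝ)⁻¹ • A ^ n) x := by
    rw [exp_eq_tsum (𝕂 := ℝ)]
    exact (ContinuousLinearMap.apply ℝ F x).map_tsum hs
  have h2 : ∀ n : ℕ, ((Nat.factorial n : ℝ)⁻¹ • A ^ n) x
      = ((Nat.factorial n : ℝ)⁻¹ * c ^ n) • x := by
    intro n
    rw [ContinuousLinearMap.smul_apply, hpow, smul_smul]
  have hs2 : Summable fun n : ℕ => (Nat.factorial n : ℝ)⁻¹ * c ^ n := by
    simpa [smul_eq_mul] using expSeries_summable' (𝕂 := ℝ) (c : ℝ)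
  have h3 : Real.exp c = ∑' n : ℕ, (Nat.factorial n : ℝ)⁻¹ * c ^ n := by
    rw [Real.exp_eq_exp_ℝ, exp_eq_tsum (𝕂 := ℝ)]
    simp [smul_eq_mul]
  rw [h1]
  simp_rw [h2]
  rw [hs2.tsum_smul_const, h3]

lemma spectral_bound {F : Type*} [NormedAddCommGroup F] [InnerProductSpace ℝ F]
    [FiniteDimensional ℝ F]
    (H : F →L[ℝ] F) (hH : ∀ x y : F, ⟪H x, y⟫ = ⟪x, H y⟫)
    (E₀ E₁ : ℝ) (hgap : E₀ < E₁)
    (ψ₀ : F) (hψ₀ : ‖ψ₀‖ = 1) (heig : H ψ₀ = E₀ • ψ₀)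
    (hspec : ∀ w : F, ⟪ψ₀, w⟫ = 0 → E₁ * ‖w‖ ^ 2 ≤ ⟪w, H w⟫)
    (w : F) (hw : ⟪ψ₀, w⟫ = 0) (t : ℝ) (ht : 0 ≤ t) :
    ⟪ψ₀, NormedSpace.exp ((-2 * t) • H) w⟫ = 0 ∧
      ‖NormedSpace.exp ((-2 * t) • H) w‖ ≤ Real.exp (-2 * t * E₁) * ‖w‖ := by
  have hT : (H : F →ₗ[ℝ] F).IsSymmetric := fun x y => hH x y
  set b := hT.eigenvectorBasis rfl with hb
  set μ := hT.eigenvalues rfl with hμ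
  have heigi : ∀ i, H (b i) = μ i • b i := fun i => hT.apply_eigenvectorBasis rfl i
  have hψψ : ⟪ψ₀, ψ₀⟫ = (1:ℝ) := by
    rw [real_inner_self_eq_norm_sq, hψ₀]; norm_num
  have hbnorm : ∀ i, ‖b i‖ = 1 := fun i => b.orthonormal.1 i
  have key : ∀ i, ⟪b i, w⟫ = 0 ∨ (E₁ ≤ μ i ∧ ⟪ψ₀, b i⟫ = 0) := by
    intro i
    have hbb : ⟪b i, b i⟫ = (1:ℝ) := by
      rw [real_inner_self_eq_norm_sq, hbnorm]; norm_num
    by_cases hle : E₁ ≤ μ i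
    · right
      refine ⟨hle, ?_⟩
      have h1 : E₀ * ⟪ψ₀, b i⟫ = μ i * ⟪ψ₀, b i⟫ := by
        calc E₀ * ⟪ψ₀, b i⟫ = ⟪E₀ • ψ₀, b i⟫ := (real_inner_smul_left _ _ _).symm
          _ = ⟪H ψ₀, b i⟫ := by rw [heig]
          _ = ⟪ψ₀, H (b i)⟫ := hH _ _
          _ = μ i * ⟪ψ₀, b i⟫ := by rw [heigi, real_inner_smul_right]
      have hne : E₀ ≠ μ i := (hgap.trans_le hle).ne
      by_contra hc
      exact hne (mul_right_cancel₀ hc h1)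
    · left
      push_neg at hle
      set c := ⟪ψ₀, b i⟫ with hc
      have hbψ : ⟪b i, ψ₀⟫ = c := by rw [hc, real_inner_comm]
      set u := b i - c • ψ₀ with hu
      have hu0 : ⟪ψ₀, u⟫ = 0 := by
        simp [hu, inner_sub_right, real_inner_smul_right, hψψ, hψ₀, ← hc]
      have hub : ⟪u, b i⟫ = 1 - c ^ 2 := by
        rw [hu, inner_sub_left, real_inner_smul_left, hbb]
        rw [hc]; ring
      have huψ : ⟪u, ψ₀⟫ = 0 := by rw [real_inner_comm]; exact hu0
      have hnu : ‖u‖ ^ 2 = 1 - c ^ 2 := by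
        rw [← real_inner_self_eq_norm_sq]
        calc ⟪u, u⟫ = ⟪u, b i⟫ - c * ⟪u, ψ₀⟫ := by
              rw [hu]
              rw [inner_sub_right, real_inner_smul_right, ← hu]
          _ = 1 - c ^ 2 := by rw [hub, huψ]; ring
      have hHu : H u = μ i • b i - (c * E₀) • ψ₀ := by
        rw [hu, map_sub, map_smul, heigi, heig, smul_smul]
      have huHu : ⟪u, H u⟫ = μ i * (1 - c ^ 2) := by
        rw [hHu, inner_sub_right, real_inner_smul_right, real_inner_smul_right, hub, huψ]
        ring
      have hsp := hspec u hu0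
      rw [hnu, huHu] at hsp
      have hc2 : 1 - c ^ 2 ≤ 0 := by nlinarith
      have hu0' : u = 0 := by
        have : ‖u‖ ^ 2 ≤ 0 := by rw [hnu]; exact hc2
        have : ‖u‖ = 0 := by nlinarith [norm_nonneg u, sq_nonneg ‖u‖]
        exact norm_eq_zero.mp this
      have hbi : b i = c • ψ₀ := by
        have := sub_eq_zero.mp hu0'
        exact this
      rw [hbi, real_inner_smul_left, hw, mul_zero]
  set A := NormedSpace.exp ((-2 * t) • H) with hA
  have hexpb : ∀ i, A (b i) = Real.exp (-2 * t * μ i) • b i := by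
    intro i
    refine exp_apply_eigen _ _ _ ?_
    rw [ContinuousLinearMap.smul_apply, heigi, smul_smul]
  have hreprw : ∑ i, ⟪b i, w⟫ • b i = w := by
    conv_rhs => rw [← b.sum_repr w]
    exact Finset.sum_congr rfl fun i _ => by rw [b.repr_apply_apply]
  have hexpw : A w = ∑ i, (Real.exp (-2 * t * μ i) * ⟪b i, w⟫) • b i := by
    conv_lhs => rw [← hreprw]
    rw [map_sum]
    refine Finset.sum_congr rfl fun i _ => ?_
    rw [map_smul, hexpb, smul_smul, mul_comm]
  constructor
  · rw [hexpw, inner_sum]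
    refine Finset.sum_eq_zero fun i _ => ?_
    rw [real_inner_smul_right]
    rcases key i with h | h
    · rw [h]; ring
    · rw [h.2]; ring
  · have hnExp : ‖A w‖ ^ 2 = ∑ i, (Real.exp (-2 * t * μ i) * ⟪b i, w⟫) ^ 2 := by
      rw [← real_inner_self_eq_norm_sq, hexpw,
        b.orthonormal.inner_sum _ _ Finset.univ]
      exact Finset.sum_congr rfl fun i _ => by simp [sq]
    have hnw : ‖w‖ ^ 2 = ∑ i, ⟪b i, w⟫ ^ 2 := by
      rw [← real_inner_self_eq_norm_sq]
      conv_lhs => rw [← hreprw]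
      rw [b.orthonormal.inner_sum _ _ Finset.univ]
      exact Finset.sum_congr rfl fun i _ => by simp [sq]
    have hsq : ‖A w‖ ^ 2 ≤ (Real.exp (-2 * t * E₁) * ‖w‖) ^ 2 := by
      rw [hnExp, mul_pow, hnw, Finset.mul_sum]
      refine Finset.sum_le_sum fun i _ => ?_
      rcases key i with h | h
      · rw [h]; simp
      · have hexp_le : Real.exp (-2 * t * μ i) ≤ Real.exp (-2 * t * E₁) := by
          apply Real.exp_le_exp.mpr
          nlinarith [h.1]
        have h0 : (0:ℝ) ≤ Real.exp (-2 * t * μ i) := (Real.exp_pos _).le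
        have h2 : Real.exp (-2 * t * μ i) ^ 2 ≤ Real.exp (-2 * t * E₁) ^ 2 := by
          rw [sq, sq]; exact mul_le_mul hexp_le hexp_le h0 (Real.exp_pos _).le
        rw [mul_pow]
        exact mul_le_mul_of_nonneg_right h2 (sq_nonneg _)
    have h1 := Real.sqrt_le_sqrt hsq
    rwa [Real.sqrt_sq (norm_nonneg _),
      Real.sqrt_sq (mul_nonneg (Real.exp_pos _).le (norm_nonneg _))] at h1

/-- Convergence of the normalized imaginary-time evolution to the ground state:
if `E₀` is the simple smallest eigenvalue of `H` with unit eigenvector `ψ₀`, and the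
Rayleigh quotient on the orthogonal complement of `ψ₀` is bounded below by the second
smallest eigenvalue `E₁ > E₀`, then the normalized flow starting at a unit vector `φ`
with nonzero projection `v₀` onto `span(ψ₀)` converges to `v₀/‖v₀‖` at exponential rate
`e^{−2(E₁−E₀)t}` with prefactor `√2 ‖w₀‖/‖v₀‖`. -/
theorem gradient_flow_convergence
    {F : Type*} [NormedAddCommGroup F] [InnerProductSpace ℝ F] [FiniteDimensional ℝ F]
    (H : F →L[ℝ] F) (hH : ∀ x y : F, ⟪H x, y⟫ = ⟪x, H y⟫)
    (E₀ E₁ : ℝ) (hgap : E₀ < E₁)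
    (ψ₀ : F) (hψ₀ : ‖ψ₀‖ = 1) (heig : H ψ₀ = E₀ • ψ₀)
    (hspec : ∀ w : F, ⟪ψ₀, w⟫ = 0 → E₁ * ‖w‖ ^ 2 ≤ ⟪w, H w⟫)
    (φ : F) (hφ : ‖φ‖ = 1)
    (v₀ w₀ : F) (hv₀ : v₀ = ⟪φ, ψ₀⟫ • ψ₀) (hw₀ : w₀ = φ - v₀) (hv₀ne : v₀ ≠ 0)
    (t : ℝ) (ht : 0 ≤ t) :
    ‖‖v₀‖⁻¹ • v₀ -
        ‖NormedSpace.exp ((-2 * t) • H) φ‖⁻¹ • NormedSpace.exp ((-2 * t) • H) φ‖ ≤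
      Real.sqrt 2 * (‖w₀‖ / ‖v₀‖) * Real.exp (-2 * (E₁ - E₀) * t) := by
  set c := (⟪φ, ψ₀⟫ : ℝ) with hcdef
  have hψψ : ⟪ψ₀, ψ₀⟫ = (1:ℝ) := by
    rw [real_inner_self_eq_norm_sq, hψ₀]; norm_num
  have hcne : c ≠ 0 := by
    intro h
    apply hv₀ne
    rw [hv₀, h, zero_smul]
  have hw0 : ⟪ψ₀, w₀⟫ = 0 := by
    rw [hw₀, hv₀, inner_sub_right, real_inner_smul_right, hψψ, real_inner_comm, ← hcdef]
    ring
  set A := NormedSpace.exp ((-2 * t) • H) with hA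
  have hAψ : A ψ₀ = Real.exp (-2 * t * E₀) • ψ₀ := by
    rw [hA]
    refine exp_apply_eigen _ _ _ ?_
    rw [ContinuousLinearMap.smul_apply, heig, smul_smul]
  obtain ⟨hr0, hrle⟩ := spectral_bound H hH E₀ E₁ hgap ψ₀ hψ₀ heig hspec w₀ hw0 t ht
  set r := A w₀ with hr
  clear_value A
  clear_value r
  set e0 := Real.exp (-2 * t * E₀) with he0
  set e1 := Real.exp (-2 * t * E₁) with he1
  set a := c * e0 with ha
  have hx : A φ = a • ψ₀ + r := by
    have hφeq : φ = v₀ + w₀ := by rw [hw₀]; abel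
    rw [hφeq, map_add, hv₀, map_smul, hAψ, smul_smul, ← ha, ← hr]
  have he0pos : (0:ℝ) < e0 := Real.exp_pos _
  have he1pos' : (0:ℝ) < e1 := Real.exp_pos _
  have hane : a ≠ 0 := mul_ne_zero hcne he0pos.ne'
  clear_value c e0 e1 a
  have haabs : |a| = |c| * e0 := by rw [ha, abs_mul, abs_of_pos he0pos]
  have hapos : (0:ℝ) < |a| := abs_pos.mpr hane
  have hv₀n : ‖v₀‖ = |c| := by
    rw [hv₀, norm_smul, hψ₀, mul_one, Real.norm_eq_abs]
  have hψr : ⟪ψ₀, A φ⟫ = a := by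
    rw [hx, inner_add_right, real_inner_smul_right, hψψ, hr0]
    ring
  have hxsq : ‖A φ‖ ^ 2 = a ^ 2 + ‖r‖ ^ 2 := by
    rw [hx, norm_add_sq_real, real_inner_smul_left, hr0, norm_smul, hψ₀, mul_one,
      Real.norm_eq_abs, sq_abs]
    ring
  have hax : |a| ≤ ‖A φ‖ := by
    have h2 : a ^ 2 ≤ ‖A φ‖ ^ 2 := by nlinarith [sq_nonneg ‖r‖]
    calc |a| = Real.sqrt (a ^ 2) := (Real.sqrt_sq_eq_abs a).symm
      _ ≤ Real.sqrt (‖A φ‖ ^ 2) := Real.sqrt_le_sqrt h2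
      _ = ‖A φ‖ := Real.sqrt_sq (norm_nonneg _)
  have hxpos : (0:ℝ) < ‖A φ‖ := lt_of_lt_of_le hapos hax
  set v := ‖v₀‖⁻¹ • v₀ with hv
  set xh := ‖A φ‖⁻¹ • A φ with hxh
  have hvn : ‖v‖ = 1 := by
    rw [hv, norm_smul, norm_inv, norm_norm, inv_mul_cancel₀ (norm_ne_zero_iff.mpr hv₀ne)]
  have hxhn : ‖xh‖ = 1 := by
    rw [hxh, norm_smul, norm_inv, norm_norm, inv_mul_cancel₀ hxpos.ne']
  have hv₀x : ⟪v₀, A φ⟫ = c * a := by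
    rw [hv₀, real_inner_smul_left, hψr]
  have hvx : ⟪v, A φ⟫ = |a| := by
    rw [hv, real_inner_smul_left, hv₀x, hv₀n, haabs, ha]
    have habs : c * c = |c| * |c| := (abs_mul_abs_self c).symm
    have hcabs : |c| ≠ 0 := abs_ne_zero.mpr hcne
    field_simp
    linear_combination habs
  have hD2 : ‖v - xh‖ ^ 2 = 2 - 2 * (‖A φ‖⁻¹ * |a|) := by
    rw [norm_sub_sq_real, hvn, hxh, real_inner_smul_right, hvx, hxhn]
    ring
  have hD2le : ‖v - xh‖ ^ 2 ≤ (Real.sqrt 2 * (‖r‖ / |a|)) ^ 2 := by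
    rw [hD2, mul_pow, Real.sq_sqrt (by norm_num : (0:ℝ) ≤ 2), div_pow]
    have h1 : ‖r‖ ^ 2 = (‖A φ‖ - |a|) * (‖A φ‖ + |a|) := by
      linear_combination (sq_abs a) - hxsq
    have hf1 : 0 ≤ ‖A φ‖ - |a| := sub_nonneg.mpr hax
    have hf2 : |a| * |a| ≤ (‖A φ‖ + |a|) * ‖A φ‖ :=
      le_trans (mul_le_mul hax hax (abs_nonneg a) (norm_nonneg _))
        (mul_le_mul_of_nonneg_right (le_add_of_nonneg_right (abs_nonneg a)) (norm_nonneg _))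
    have hstep : (‖A φ‖ - |a|) * a ^ 2 ≤ ‖r‖ ^ 2 * ‖A φ‖ := by
      calc (‖A φ‖ - |a|) * a ^ 2 = (‖A φ‖ - |a|) * (|a| * |a|) := by
            rw [← sq_abs a]; ring
        _ ≤ (‖A φ‖ - |a|) * ((‖A φ‖ + |a|) * ‖A φ‖) := mul_le_mul_of_nonneg_left hf2 hf1
        _ = ‖r‖ ^ 2 * ‖A φ‖ := by rw [h1]; ring
    have ha2 : (0:ℝ) < a ^ 2 := by positivity
    rw [← sub_nonneg]
    have expand : 2 * (‖r‖ ^ 2 / |a| ^ 2) - (2 - 2 * (‖A φ‖⁻¹ * |a|))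
        = 2 * (‖r‖ ^ 2 * ‖A φ‖ - (‖A φ‖ - |a|) * a ^ 2) * ((a ^ 2)⁻¹ * ‖A φ‖⁻¹) := by
      rw [sq_abs]
      field_simp
    rw [expand]
    have hnn : 0 ≤ ‖r‖ ^ 2 * ‖A φ‖ - (‖A φ‖ - |a|) * a ^ 2 := sub_nonneg.mpr hstep
    positivity
  have hDB : ‖v - xh‖ ≤ Real.sqrt 2 * (‖r‖ / |a|) := by
    have h := Real.sqrt_le_sqrt hD2le
    rwa [Real.sqrt_sq (norm_nonneg _), Real.sqrt_sq (by positivity)] at h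
  have hee : e1 / e0 = Real.exp (-2 * (E₁ - E₀) * t) := by
    rw [he1, he0, ← Real.exp_sub]
    congr 1
    ring
  have he1pos : (0:ℝ) < e1 := he1pos'
  have hcabs : (0:ℝ) < |c| := abs_pos.mpr hcne
  calc ‖v - xh‖ ≤ Real.sqrt 2 * (‖r‖ / |a|) := hDB
    _ ≤ Real.sqrt 2 * ((‖w₀‖ / |c|) * Real.exp (-2 * (E₁ - E₀) * t)) := by
        apply mul_le_mul_of_nonneg_left ?_ (Real.sqrt_nonneg 2)
        calc ‖r‖ / |a| = ‖r‖ / (|c| * e0) := by rw [haabs]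
          _ ≤ (e1 * ‖w₀‖) / (|c| * e0) := by gcongr
          _ = (‖w₀‖ / |c|) * (e1 / e0) := by field_simp
          _ = (‖w₀‖ / |c|) * Real.exp (-2 * (E₁ - E₀) * t) := by rw [hee]
    _ = Real.sqrt 2 * (‖w₀‖ / ‖v₀‖) * Real.exp (-2 * (E₁ - E₀) * t) := by
        rw [hv₀n]; ring
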